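/- If k ≥ 1, n ≥ m ≥ 0 are integers with x_k = L_n·L_m, then |δᵏ·2⁻¹·α^{−(n+m)} − 1| < 6/α^{2m}. -/

import Mathlib

/-- The Lucas numbers: L₀ = 2, L₁ = 1, L_{n+2} = L_{n+1} + L_n. -/
def lucas : ℕ → ℕ
  | 0 => 2
  | 1 => 1
  | n + 2 => lucas (n + 1) + lucas n

/-- The golden ratio α = (1 + √5)/2. -/
noncomputable def alpha : ℝ := (1 + Real.sqrt 5) / 2

open goldenRatio in
lemma lucas_real : ∀ nn : ℕ, ((lucas nn : ℕ) : ℝ) = φ ^ nn + ψ ^ nn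
  | 0 => by norm_num [lucas]
  | 1 => by simp [lucas, Real.goldenRatio_add_goldenConj]
  | (n + 2) => by
    have h1 := lucas_real (n + 1)
    have h2 := lucas_real n
    have hg : φ ^ (n + 2) = φ ^ (n + 1) + φ ^ n := by
      have := Real.goldenRatio_sq
      calc φ ^ (n + 2) = φ ^ n * φ ^ 2 := by ring
        _ = φ ^ n * (φ + 1) := by rw [Real.goldenRatio_sq]
        _ = φ ^ (n + 1) + φ ^ n := by ring
    have hc : ψ ^ (n + 2) = ψ ^ (n + 1) + ψ ^ n := by
      calc ψ ^ (n + 2) = ψ ^ n * ψ ^ 2 := by ring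
        _ = ψ ^ n * (ψ + 1) := by rw [Real.goldenConj_sq]
        _ = ψ ^ (n + 1) + ψ ^ n := by ring
    show ((lucas (n + 1) + lucas n : ℕ) : ℝ) = _
    push_cast
    rw [h1, h2, hg, hc]
    ring


lemma aux_expr (A T r e : ℝ) (hAT : A * T = 1) : (A + r - e) * T - 1 = (r - e) * T := by
  have h : (A + r - e) * T - 1 = A * T + (r - e) * T - 1 := by ring
  rw [h, hAT]; ring

lemma aux_key (g u : ℝ) (n m : ℕ) (hnm : m ≤ n) (hu0 : 0 < u) (hu1 : u ≤ 1)
    (hgu : g * u = 1) :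
    (g ^ n * u ^ m + u ^ n * g ^ m + u ^ (n + m) + 1 / 2) * u ^ (n + m)
      < 6 * u ^ (2 * m) := by
  have e1 : g ^ n * u ^ m * u ^ (n + m) = (g * u) ^ n * u ^ (2 * m) := by ring
  have e2 : u ^ n * g ^ m * u ^ (n + m) = (g * u) ^ m * u ^ (2 * n) := by ring
  have e3 : u ^ (n + m) * u ^ (n + m) = u ^ (2 * n + 2 * m) := by ring
  rw [hgu, one_pow] at e1 e2
  have i2 : u ^ (2 * n) ≤ u ^ (2 * m) :=
    pow_le_pow_of_le_one (le_of_lt hu0) hu1 (by omega)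
  have i3 : u ^ (2 * n + 2 * m) ≤ u ^ (2 * m) :=
    pow_le_pow_of_le_one (le_of_lt hu0) hu1 (by omega)
  have i4 : u ^ (n + m) ≤ u ^ (2 * m) :=
    pow_le_pow_of_le_one (le_of_lt hu0) hu1 (by omega)
  have htm : 0 < u ^ (2 * m) := pow_pos hu0 _
  nlinarith [e1, e2, e3]

open goldenRatio in
theorem stmt_6
    (d x1 y1 : ℕ) (ε : ℤ) (δ η : ℝ) (X : ℕ → ℝ)
    (hd : 2 ≤ d) (hdsf : Squarefree d)
    (hx1 : 1 ≤ x1) (hy1 : 1 ≤ y1)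
    (hε : (x1 : ℤ) ^ 2 - (d : ℤ) * (y1 : ℤ) ^ 2 = ε)
    (hεpm : ε = 1 ∨ ε = -1)
    (hmin : ∀ x y : ℕ, 1 ≤ x → 1 ≤ y →
      ((x : ℤ) ^ 2 - (d : ℤ) * (y : ℤ) ^ 2 = 1 ∨
        (x : ℤ) ^ 2 - (d : ℤ) * (y : ℤ) ^ 2 = -1) → x1 ≤ x)
    (hδ : δ = (x1 : ℝ) + (y1 : ℝ) * Real.sqrt d)
    (hη : η = (x1 : ℝ) - (y1 : ℝ) * Real.sqrt d)
    (hX : ∀ k : ℕ, X k = (δ ^ k + η ^ k) / 2)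
    (k n m : ℕ) (hk : 1 ≤ k) (hnm : m ≤ n)
    (hsol : X k = ((lucas n * lucas m : ℕ) : ℝ)) :
    |δ ^ k * 2⁻¹ * alpha ^ (-((n : ℤ) + (m : ℤ))) - 1| < 6 / alpha ^ (2 * m) := by
  have hα : alpha = φ := rfl
  have hg0 : (0 : ℝ) < φ := Real.goldenRatio_pos
  have hg1 : (1 : ℝ) < φ := Real.one_lt_goldenRatio
  set t : ℝ := φ⁻¹ with ht_def
  have ht0 : 0 < t := inv_pos.mpr hg0
  have ht1 : t ≤ 1 := by
    rw [ht_def, inv_le_one_iff₀]; right; exact le_of_lt hg1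
  have htg : φ * t = 1 := mul_inv_cancel₀ (ne_of_gt hg0)
  have hψ : |ψ| = t := by
    rw [abs_of_neg Real.goldenConj_neg, ht_def, Real.inv_goldenRatio]
  -- bound on η
  have hd0 : (0 : ℝ) ≤ (d : ℝ) := by positivity
  have hsq : Real.sqrt d * Real.sqrt d = (d : ℝ) := Real.mul_self_sqrt hd0
  have hδη : δ * η = (ε : ℝ) := by
    have : δ * η = (x1 : ℝ) ^ 2 - (y1 : ℝ) ^ 2 * (Real.sqrt d * Real.sqrt d) := by
      rw [hδ, hη]; ring
    rw [this, hsq]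
    have := hε
    push_cast [← hε]
    ring
  have hsd : (1 : ℝ) ≤ Real.sqrt d := by
    rw [show (1 : ℝ) = Real.sqrt 1 by simp]
    exact Real.sqrt_le_sqrt (by exact_mod_cast le_trans (by norm_num) hd)
  have hδ2 : (2 : ℝ) ≤ δ := by
    rw [hδ]
    have hx1' : (1 : ℝ) ≤ (x1 : ℝ) := by exact_mod_cast hx1
    have hy1' : (1 : ℝ) ≤ (y1 : ℝ) := by exact_mod_cast hy1
    nlinarith
  have hδpos : 0 < δ := by linarith
  have hεabs : |(ε : ℝ)| = 1 := by rcases hεpm with h | h <;> simp [h]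
  have hηabs : |η| ≤ 1 := by
    have h1 : δ * |η| = 1 := by
      have := congrArg abs hδη
      rwa [abs_mul, abs_of_pos hδpos, hεabs] at this
    nlinarith [abs_nonneg η]
  have hηk : |η ^ k| ≤ 1 := by
    rw [abs_pow]; exact pow_le_one₀ (abs_nonneg η) hηabs
  -- rewrite the zpow
  have hzpow : alpha ^ (-((n : ℤ) + (m : ℤ))) = t ^ (n + m) := by
    have he : (-((n : ℤ) + (m : ℤ))) = -(((n + m : ℕ) : ℤ)) := by push_cast; ring
    rw [hα, he, zpow_neg, zpow_natCast, ht_def, inv_pow]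
  -- decompose lucas n * lucas m
  have hL : (((lucas n * lucas m : ℕ)) : ℝ)
      = φ ^ (n + m) + (φ ^ n * ψ ^ m + ψ ^ n * φ ^ m + ψ ^ (n + m)) := by
    push_cast
    rw [lucas_real n, lucas_real m]
    ring
  set R : ℝ := φ ^ n * ψ ^ m + ψ ^ n * φ ^ m + ψ ^ (n + m) with hR
  have hRabs : |R| ≤ φ ^ n * t ^ m + t ^ n * φ ^ m + t ^ (n + m) := by
    calc |R| ≤ |φ ^ n * ψ ^ m| + |ψ ^ n * φ ^ m| + |ψ ^ (n + m)| := by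
          exact (abs_add_three _ _ _)
      _ = φ ^ n * t ^ m + t ^ n * φ ^ m + t ^ (n + m) := by
          rw [abs_mul, abs_mul, abs_pow, abs_pow, abs_pow, abs_pow, abs_pow, hψ,
            abs_of_pos hg0]
  -- main rewriting of the expression
  have hδk : δ ^ k * 2⁻¹ = (((lucas n * lucas m : ℕ)) : ℝ) - η ^ k / 2 := by
    rw [← hsol, hX k]; ring
  have hexpr : δ ^ k * 2⁻¹ * alpha ^ (-((n : ℤ) + (m : ℤ))) - 1
      = (R - η ^ k / 2) * t ^ (n + m) := by
    rw [hδk, hzpow, hL]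
    have hAt : φ ^ (n + m) * t ^ (n + m) = 1 := by
      rw [← mul_pow, htg, one_pow]
    exact aux_expr _ _ _ _ hAt
  rw [hexpr]
  -- final estimates
  have hRHS : 6 / alpha ^ (2 * m) = 6 * t ^ (2 * m) := by
    rw [hα, div_eq_mul_inv, ht_def, inv_pow]
  rw [hRHS, abs_mul, abs_pow, abs_of_pos ht0]
  have hbound : |R - η ^ k / 2| ≤ φ ^ n * t ^ m + t ^ n * φ ^ m + t ^ (n + m) + 1 / 2 := by
    calc |R - η ^ k / 2| ≤ |R| + |η ^ k / 2| := abs_sub _ _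
      _ ≤ φ ^ n * t ^ m + t ^ n * φ ^ m + t ^ (n + m) + 1 / 2 := by
          rw [abs_div, abs_two]
          have : |η ^ k| / 2 ≤ 1 / 2 := by linarith
          linarith [hRabs]
  have htpow : 0 < t ^ (n + m) := pow_pos ht0 _
  have key : (φ ^ n * t ^ m + t ^ n * φ ^ m + t ^ (n + m) + 1 / 2) * t ^ (n + m)
      < 6 * t ^ (2 * m) := aux_key φ t n m hnm ht0 ht1 htg
  calc |R - η ^ k / 2| * t ^ (n + m)
      ≤ (φ ^ n * t ^ m + t ^ n * φ ^ m + t ^ (n + m) + 1 / 2) * t ^ (n + m) :=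
        mul_le_mul_of_nonneg_right hbound (le_of_lt htpow)
    _ < 6 * t ^ (2 * m) := key
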